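/- Let a > 0 and t > 0, and let u : [0,t] → ℝ be continuously differentiable. Then lim_{γ → 0⁺} ∂/∂γ [ ∫_0^t u(t−s)·(√a·γ/(2√π·s^{3/2}))·e^{−aγ²/(4s)} ds ] = −(√a/√π)·( u(0)/√t + ∫_0^t u'(t−s)/√s ds ). -/

import Mathlib

open Real MeasureTheory intervalIntegral Filter Topology

open Set

noncomputable def kk (a γ s : ℝ) : ℝ :=
  Real.sqrt a * γ / (2 * Real.sqrt Real.pi * s ^ ((3 : ℝ) / 2)) * Real.exp (-(a * γ ^ 2 / (4 * s)))

noncomputable def Phi (a γ x : ℝ) : ℝ := ∫ σ in (0:ℝ)..x, kk a γ σ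

noncomputable def mm (a γ s : ℝ) : ℝ :=
  -(Real.sqrt a / Real.sqrt Real.pi) * (Real.exp (-(a * γ ^ 2 / (4 * s))) / Real.sqrt s)

noncomputable def DD (a γ σ : ℝ) : ℝ :=
  Real.sqrt a / (2 * Real.sqrt Real.pi) *
    ((1 / σ ^ ((3:ℝ)/2) - a * γ ^ 2 / (2 * σ ^ ((5:ℝ)/2))) * Real.exp (-(a * γ ^ 2 / (4 * σ))))

lemma rpow_mul_exp_le {p x : ℝ} (hp0 : 0 ≤ p) (hp3 : p ≤ 3) (hx : 0 ≤ x) :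
    x ^ p * Real.exp (-x) ≤ 28 := by
  rcases le_or_gt x 1 with h | h
  · have h1 : x ^ p ≤ 1 := Real.rpow_le_one hx h hp0
    have h2 : Real.exp (-x) ≤ 1 := Real.exp_le_one_iff.2 (by linarith)
    nlinarith [Real.exp_pos (-x), Real.rpow_nonneg hx p]
  · have h1 : x ^ p ≤ x ^ (3:ℝ) := Real.rpow_le_rpow_of_exponent_le h.le hp3
    have h3 : x ^ (3:ℝ) = x ^ (3:ℕ) := by
      rw [← Real.rpow_natCast x 3]; norm_num
    have hex : x/3 + 1 ≤ Real.exp (x/3) := Real.add_one_le_exp (x/3)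
    have hx3 : (0:ℝ) ≤ x/3 := by linarith
    have h9 : (x/3)^3 ≤ (Real.exp (x/3))^3 := by
      apply pow_le_pow_left₀ hx3; linarith
    have hcube : (Real.exp (x/3))^3 = Real.exp x := by
      rw [← Real.exp_nat_mul]; ring_nf
    have hpos : 0 < Real.exp x := Real.exp_pos x
    have hxe : x^3 ≤ 27 * Real.exp x := by
      rw [hcube] at h9; nlinarith
    have hn : Real.exp (-x) = (Real.exp x)⁻¹ := Real.exp_neg x
    have : x ^ p * Real.exp (-x) ≤ x^(3:ℕ) * Real.exp (-x) := by
      apply mul_le_mul_of_nonneg_right (h3 ▸ h1) (Real.exp_pos _).le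
    refine this.trans ?_
    rw [hn]
    have hinv : Real.exp x * (Real.exp x)⁻¹ = 1 := mul_inv_cancel₀ hpos.ne'
    push_cast
    nlinarith [inv_pos.2 hpos]

lemma exp_div_rpow_le {c σ p : ℝ} (hc : 0 < c) (hσ : 0 < σ) (hp0 : 0 ≤ p) (hp3 : p ≤ 3) :
    Real.exp (-(c/σ)) / σ ^ p ≤ 28 / c ^ p := by
  have hx : (0:ℝ) ≤ c/σ := by positivity
  have key := rpow_mul_exp_le hp0 hp3 hx
  rw [Real.div_rpow hc.le hσ.le] at key
  have hcp : 0 < c ^ p := Real.rpow_pos_of_pos hc p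
  have hsp : 0 < σ ^ p := Real.rpow_pos_of_pos hσ p
  rw [div_le_div_iff₀ hsp hcp]
  rw [div_mul_eq_mul_div, div_le_iff₀ hsp] at key
  nlinarith

lemma tendsto_exp_div_rpow_zero {c : ℝ} (p : ℝ) (hc : 0 < c) :
    Tendsto (fun σ : ℝ => Real.exp (-(c/σ)) / σ ^ p) (𝓝[>] (0:ℝ)) (𝓝 0) := by
  have h := (tendsto_rpow_mul_exp_neg_mul_atTop_nhds_zero p c hc).comp tendsto_inv_nhdsGT_zero
  refine h.congr' ?_
  filter_upwards [self_mem_nhdsWithin] with σ (hσ : σ ∈ Ioi (0:ℝ))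
  have hσ0 : (0:ℝ) < σ := hσ
  simp only [Function.comp]
  rw [Real.inv_rpow hσ0.le, show -c * σ⁻¹ = -(c/σ) by ring]
  ring

lemma rpow_nonpos_32 {s : ℝ} (hs : s ≤ 0) : s ^ ((3:ℝ)/2) = 0 := by
  rcases lt_or_eq_of_le hs with h | h
  · rw [Real.rpow_def_of_neg h]
    have hcos : Real.cos ((3:ℝ)/2 * π) = 0 := by
      rw [show (3:ℝ)/2 * π = π/2 + π by ring, Real.cos_add_pi, Real.cos_pi_div_two, neg_zero]
    rw [hcos, mul_zero]
  · rw [h, Real.zero_rpow (by norm_num)]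

lemma kk_nonpos {a γ s : ℝ} (hs : s ≤ 0) : kk a γ s = 0 := by
  unfold kk
  rw [rpow_nonpos_32 hs, mul_zero, div_zero, zero_mul]

lemma sqrtpi_pos : 0 < Real.sqrt π := Real.sqrt_pos.2 Real.pi_pos

lemma rpow_32_eq {σ : ℝ} (hσ : 0 < σ) : σ ^ ((3:ℝ)/2) = σ * Real.sqrt σ := by
  rw [show (3:ℝ)/2 = 1 + 1/2 by norm_num, Real.rpow_add hσ, Real.rpow_one,
    Real.sqrt_eq_rpow]

lemma rpow_52_eq {σ : ℝ} (hσ : 0 < σ) : σ ^ ((5:ℝ)/2) = σ^2 * Real.sqrt σ := by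
  rw [show (5:ℝ)/2 = 2 + 1/2 by norm_num, Real.rpow_add hσ, Real.sqrt_eq_rpow,
    show (2:ℝ) = ((2:ℕ):ℝ) by norm_num, Real.rpow_natCast]

lemma exp_arg_eq (a γ σ : ℝ) : a * γ ^ 2 / (4 * σ) = (a * γ ^ 2 / 4) / σ := by
  rw [div_div]

lemma kk_measurable (a γ : ℝ) : Measurable (kk a γ) := by
  unfold kk
  have h4 : Measurable (fun s : ℝ => 4 * s) := measurable_id.const_mul 4
  measurability

lemma DD_measurable (a γ : ℝ) : Measurable (DD a γ) := by
  unfold DD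
  have h4 : Measurable (fun s : ℝ => 4 * s) := measurable_id.const_mul 4
  measurability

lemma kk_continuousAt {a γ s : ℝ} (hs : 0 < s) : ContinuousAt (kk a γ) s := by
  unfold kk
  have h1 : ContinuousAt (fun s : ℝ => s ^ ((3:ℝ)/2)) s :=
    (Real.continuousAt_rpow_const s _ (Or.inl hs.ne'))
  have h32 : s ^ ((3:ℝ)/2) ≠ 0 := (Real.rpow_pos_of_pos hs _).ne'
  apply ContinuousAt.mul
  · exact continuousAt_const.div (continuousAt_const.mul h1)
      (by positivity)
  · exact (Real.continuous_exp.continuousAt).comp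
      ((continuousAt_const.div (continuousAt_const.mul continuousAt_id) (mul_ne_zero four_ne_zero (by positivity))).neg)

lemma kk_eq_pos {a γ σ : ℝ} (hσ : 0 < σ) :
    kk a γ σ = Real.sqrt a * γ / (2 * Real.sqrt π) *
      (Real.exp (-((a * γ ^ 2 / 4) / σ)) / σ ^ ((3:ℝ)/2)) := by
  unfold kk
  rw [← exp_arg_eq]
  have h32 : σ ^ ((3:ℝ)/2) ≠ 0 := (Real.rpow_pos_of_pos hσ _).ne'
  field_simp

lemma kk_continuousOn {a γ : ℝ} (ha : 0 < a) (hγ : 0 < γ) :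
    ContinuousOn (kk a γ) (Ici 0) := by
  intro s hs
  rcases eq_or_lt_of_le (mem_Ici.1 hs) with h | h
  · -- s = 0
    subst h
    rw [← continuousWithinAt_Ioi_iff_Ici]
    have hc : (0:ℝ) < a * γ ^ 2 / 4 := by positivity
    have hT : Tendsto (kk a γ) (𝓝[>] (0:ℝ)) (𝓝 0) := by
      have := (tendsto_exp_div_rpow_zero ((3:ℝ)/2) hc).const_mul
        (Real.sqrt a * γ / (2 * Real.sqrt π))
      rw [mul_zero] at this
      refine this.congr' ?_
      filter_upwards [self_mem_nhdsWithin] with σ (hσ : σ ∈ Ioi (0:ℝ))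
      exact (kk_eq_pos hσ).symm
    have h0 : kk a γ 0 = 0 := kk_nonpos le_rfl
    show Tendsto (kk a γ) (𝓝[>] (0:ℝ)) (𝓝 (kk a γ 0))
    rw [h0]
    exact hT
  · exact (kk_continuousAt h).continuousWithinAt

lemma kk_abs_le {a γ σ : ℝ} (ha : 0 < a) (hγ : 0 < γ) (hσ : 0 ≤ σ) :
    |kk a γ σ| ≤ Real.sqrt a * γ / (2 * Real.sqrt π) * (28 / (a * γ ^ 2 / 4) ^ ((3:ℝ)/2)) := by
  rcases eq_or_lt_of_le hσ with h | h
  · rw [← h, kk_nonpos le_rfl, abs_zero]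
    positivity
  · rw [kk_eq_pos h, abs_mul]
    have hc : (0:ℝ) < a * γ ^ 2 / 4 := by positivity
    have h1 : |Real.sqrt a * γ / (2 * Real.sqrt π)| = Real.sqrt a * γ / (2 * Real.sqrt π) := by
      rw [abs_of_nonneg]; positivity
    rw [h1]
    apply mul_le_mul_of_nonneg_left _ (by positivity)
    rw [abs_of_nonneg (by positivity)]
    exact exp_div_rpow_le hc h (by norm_num) (by norm_num)

lemma kk_integrableOn {a γ T : ℝ} (ha : 0 < a) (hγ : 0 < γ) (hT : 0 ≤ T) :
    IntegrableOn (kk a γ) (Icc 0 T) volume := by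
  refine Measure.integrableOn_of_bounded (μ := volume) (s := Icc 0 T)
      (M := Real.sqrt a * γ / (2 * Real.sqrt π) * (28 / (a * γ ^ 2 / 4) ^ ((3:ℝ)/2)))
      ?_ ?_ ?_
  · exact (measure_Icc_lt_top).ne
  · exact (kk_measurable a γ).aestronglyMeasurable
  · refine (ae_restrict_iff' measurableSet_Icc).2 (Eventually.of_forall fun σ hσ => ?_)
    rw [Real.norm_eq_abs]
    exact kk_abs_le ha hγ hσ.1

lemma kk_intervalIntegrable {a γ T : ℝ} (ha : 0 < a) (hγ : 0 < γ) (hT : 0 ≤ T) :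
    IntervalIntegrable (kk a γ) volume 0 T :=
  (intervalIntegrable_iff_integrableOn_Icc_of_le hT).2 (kk_integrableOn ha hγ hT)

lemma Phi_hasDerivAt {a γ s : ℝ} (ha : 0 < a) (hγ : 0 < γ) (hs : 0 < s) :
    HasDerivAt (Phi a γ) (kk a γ s) s := by
  apply intervalIntegral.integral_hasDerivAt_right (kk_intervalIntegrable ha hγ hs.le)
  · exact (kk_measurable a γ).stronglyMeasurable.stronglyMeasurableAtFilter
  · exact kk_continuousAt hs

lemma Phi_continuousOn {a γ T : ℝ} (ha : 0 < a) (hγ : 0 < γ) (hT : 0 ≤ T) :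
    ContinuousOn (Phi a γ) (Icc 0 T) := by
  have := intervalIntegral.continuousOn_primitive_interval
    (μ := volume) (f := kk a γ) (a := 0) (b := T)
    (by rw [uIcc_of_le hT]; exact kk_integrableOn ha hγ hT)
  rw [uIcc_of_le hT] at this
  exact this

lemma Phi_zero (a γ : ℝ) : Phi a γ 0 = 0 := intervalIntegral.integral_same

lemma mm_zero (a γ : ℝ) : mm a γ 0 = 0 := by
  unfold mm
  rw [Real.sqrt_zero, div_zero, mul_zero]

lemma mm_eq_pos {a γ σ : ℝ} (hσ : 0 < σ) :
    mm a γ σ = -(Real.sqrt a / Real.sqrt π) *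
      (Real.exp (-((a * γ ^ 2 / 4) / σ)) / σ ^ ((1:ℝ)/2)) := by
  unfold mm
  rw [← exp_arg_eq, Real.sqrt_eq_rpow σ]

lemma mm_continuousAt {a γ σ : ℝ} (hσ : 0 < σ) : ContinuousAt (fun x => mm a γ x) σ := by
  unfold mm
  have hsq : Real.sqrt σ ≠ 0 := (Real.sqrt_pos.2 hσ).ne'
  apply ContinuousAt.mul continuousAt_const
  apply ContinuousAt.div
  · exact (Real.continuous_exp.continuousAt).comp
      ((continuousAt_const.div (continuousAt_const.mul continuousAt_id) (mul_ne_zero four_ne_zero (by positivity))).neg)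
  · exact Real.continuous_sqrt.continuousAt
  · exact hsq

lemma mm_continuousOn {a γ : ℝ} (ha : 0 < a) (hγ : 0 < γ) :
    ContinuousOn (mm a γ) (Ici 0) := by
  intro s hs
  rcases eq_or_lt_of_le (mem_Ici.1 hs) with h | h
  · subst h
    rw [← continuousWithinAt_Ioi_iff_Ici]
    have hc : (0:ℝ) < a * γ ^ 2 / 4 := by positivity
    have hT : Tendsto (mm a γ) (𝓝[>] (0:ℝ)) (𝓝 0) := by
      have := (tendsto_exp_div_rpow_zero ((1:ℝ)/2) hc).const_mul
        (-(Real.sqrt a / Real.sqrt π))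
      rw [mul_zero] at this
      refine this.congr' ?_
      filter_upwards [self_mem_nhdsWithin] with σ (hσ : σ ∈ Ioi (0:ℝ))
      exact (mm_eq_pos hσ).symm
    show Tendsto (mm a γ) (𝓝[>] (0:ℝ)) (𝓝 (mm a γ 0))
    rw [mm_zero]
    exact hT
  · exact (mm_continuousAt h).continuousWithinAt

lemma mm_hasDerivAt_sigma {a γ σ : ℝ} (hσ : 0 < σ) :
    HasDerivAt (mm a γ) (DD a γ σ) σ := by
  obtain ⟨r, hr0, rfl⟩ : ∃ r : ℝ, 0 < r ∧ r ^ 2 = σ :=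
    ⟨Real.sqrt σ, Real.sqrt_pos.2 hσ, Real.sq_sqrt hσ.le⟩
  have hr2 : (0:ℝ) < r ^ 2 := by positivity
  have hsq : Real.sqrt (r ^ 2) = r := Real.sqrt_sq hr0.le
  have h4 : (4:ℝ) * r ^ 2 ≠ 0 := by positivity
  have hinner : HasDerivAt (fun x : ℝ => -(a * γ ^ 2 / (4 * x)))
      (a * γ ^ 2 * 4 / (4 * r ^ 2) ^ 2) (r ^ 2) := by
    have h1 : HasDerivAt (fun x : ℝ => (4:ℝ) * x) 4 (r ^ 2) := by
      simpa using (hasDerivAt_id (r ^ 2)).const_mul (4:ℝ)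
    have h2 := ((hasDerivAt_const (r ^ 2) (a * γ ^ 2)).div h1 h4).neg
    refine HasDerivAt.congr_deriv h2 ?_
    field_simp
    ring
  have hexp : HasDerivAt (fun x : ℝ => Real.exp (-(a * γ ^ 2 / (4 * x))))
      (Real.exp (-(a * γ ^ 2 / (4 * r ^ 2))) * (a * γ ^ 2 * 4 / (4 * r ^ 2) ^ 2)) (r ^ 2) :=
    hinner.exp
  have hsqrt : HasDerivAt Real.sqrt (1 / (2 * Real.sqrt (r ^ 2))) (r ^ 2) :=
    Real.hasDerivAt_sqrt hr2.ne'
  have hdiv := hexp.div hsqrt (by rw [hsq]; exact hr0.ne')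
  have key := hdiv.const_mul (-(Real.sqrt a / Real.sqrt π))
  have hfun : mm a γ = fun y : ℝ =>
      -(Real.sqrt a / Real.sqrt π) * (Real.exp (-(a * γ ^ 2 / (4 * y))) / Real.sqrt y) := rfl
  rw [hfun]
  refine HasDerivAt.congr_deriv key ?_
  unfold DD
  rw [rpow_32_eq hr2, rpow_52_eq hr2, hsq]
  have hE := Real.exp_pos (-(a * γ ^ 2 / (4 * r ^ 2)))
  field_simp
  ring

noncomputable def DDbound (a γ : ℝ) : ℝ :=
  Real.sqrt a / (2 * Real.sqrt π) *
    (28 / (a * (γ/2) ^ 2 / 4) ^ ((3:ℝ)/2) +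
      a * (3*γ/2) ^ 2 / 2 * (28 / (a * (γ/2) ^ 2 / 4) ^ ((5:ℝ)/2)))

lemma DDbound_nonneg {a γ : ℝ} (ha : 0 < a) (hγ : 0 < γ) : 0 ≤ DDbound a γ := by
  unfold DDbound
  have hc0 : (0:ℝ) < a * (γ/2) ^ 2 / 4 := by positivity
  positivity

lemma DD_le {a γ γ' σ : ℝ} (ha : 0 < a) (hγ : 0 < γ) (hσ : 0 < σ)
    (h1 : γ/2 ≤ γ') (h2 : γ' ≤ 3*γ/2) :
    |DD a γ' σ| ≤ DDbound a γ := by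
  have hγ2 : (0:ℝ) < γ/2 := by positivity
  have hγ' : 0 < γ' := lt_of_lt_of_le hγ2 h1
  have hc0 : (0:ℝ) < a * (γ/2) ^ 2 / 4 := by positivity
  have h32 : (0:ℝ) < σ ^ ((3:ℝ)/2) := Real.rpow_pos_of_pos hσ _
  have h52 : (0:ℝ) < σ ^ ((5:ℝ)/2) := Real.rpow_pos_of_pos hσ _
  have hE : Real.exp (-(a * γ' ^ 2 / (4 * σ))) ≤ Real.exp (-((a * (γ/2) ^ 2 / 4) / σ)) := by
    apply Real.exp_le_exp.2
    apply neg_le_neg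
    rw [exp_arg_eq]
    gcongr
  have hEpos : (0:ℝ) < Real.exp (-(a * γ' ^ 2 / (4 * σ))) := Real.exp_pos _
  have b32 : Real.exp (-(a * γ' ^ 2 / (4 * σ))) / σ ^ ((3:ℝ)/2)
      ≤ 28 / (a * (γ/2) ^ 2 / 4) ^ ((3:ℝ)/2) := by
    refine le_trans ?_ (exp_div_rpow_le hc0 hσ (by norm_num) (by norm_num))
    gcongr
  have b52 : Real.exp (-(a * γ' ^ 2 / (4 * σ))) / σ ^ ((5:ℝ)/2)
      ≤ 28 / (a * (γ/2) ^ 2 / 4) ^ ((5:ℝ)/2) := by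
    refine le_trans ?_ (exp_div_rpow_le hc0 hσ (by norm_num) (by norm_num))
    gcongr
  have tri : |1 / σ ^ ((3:ℝ)/2) - a * γ' ^ 2 / (2 * σ ^ ((5:ℝ)/2))|
      ≤ 1 / σ ^ ((3:ℝ)/2) + a * γ' ^ 2 / (2 * σ ^ ((5:ℝ)/2)) := by
    have hA : (0:ℝ) ≤ 1 / σ ^ ((3:ℝ)/2) := by positivity
    have hB : (0:ℝ) ≤ a * γ' ^ 2 / (2 * σ ^ ((5:ℝ)/2)) := by positivity
    rw [abs_le]
    constructor <;> nlinarith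
  have step1 : |DD a γ' σ| ≤ Real.sqrt a / (2 * Real.sqrt π) *
      ((1 / σ ^ ((3:ℝ)/2) + a * γ' ^ 2 / (2 * σ ^ ((5:ℝ)/2))) *
        Real.exp (-(a * γ' ^ 2 / (4 * σ)))) := by
    unfold DD
    rw [abs_mul, abs_mul, abs_of_nonneg hEpos.le,
      abs_of_nonneg (show (0:ℝ) ≤ Real.sqrt a / (2 * Real.sqrt π) by positivity)]
    apply mul_le_mul_of_nonneg_left _ (by positivity)
    exact mul_le_mul_of_nonneg_right tri hEpos.le
  have e1 : (1 / σ ^ ((3:ℝ)/2) + a * γ' ^ 2 / (2 * σ ^ ((5:ℝ)/2))) *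
        Real.exp (-(a * γ' ^ 2 / (4 * σ)))
      = Real.exp (-(a * γ' ^ 2 / (4 * σ))) / σ ^ ((3:ℝ)/2)
        + a * γ' ^ 2 / 2 * (Real.exp (-(a * γ' ^ 2 / (4 * σ))) / σ ^ ((5:ℝ)/2)) := by
    field_simp
  refine step1.trans ?_
  rw [e1]
  unfold DDbound
  apply mul_le_mul_of_nonneg_left _ (by positivity)
  have b52' : a * γ' ^ 2 / 2 * (Real.exp (-(a * γ' ^ 2 / (4 * σ))) / σ ^ ((5:ℝ)/2))
      ≤ a * (3*γ/2) ^ 2 / 2 * (28 / (a * (γ/2) ^ 2 / 4) ^ ((5:ℝ)/2)) := by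
    apply mul_le_mul (by nlinarith [mul_self_le_mul_self hγ'.le h2, ha.le]) b52
      (by positivity) (by positivity)
  linarith

lemma DD_zero (a γ : ℝ) : DD a γ 0 = 0 := by
  unfold DD
  rw [Real.zero_rpow (by norm_num : ((3:ℝ)/2) ≠ 0), Real.zero_rpow (by norm_num : ((5:ℝ)/2) ≠ 0)]
  norm_num

lemma DD_integrableOn {a γ T : ℝ} (ha : 0 < a) (hγ : 0 < γ) (hT : 0 ≤ T) :
    IntegrableOn (DD a γ) (Icc 0 T) volume := by
  refine Measure.integrableOn_of_bounded (μ := volume) (s := Icc 0 T)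
      (M := DDbound a γ) ?_ ?_ ?_
  · exact (measure_Icc_lt_top).ne
  · exact (DD_measurable a γ).aestronglyMeasurable
  · refine (ae_restrict_iff' measurableSet_Icc).2 (Eventually.of_forall fun σ hσ => ?_)
    rw [Real.norm_eq_abs]
    rcases eq_or_lt_of_le hσ.1 with h | h
    · rw [← h, DD_zero, abs_zero]
      exact DDbound_nonneg ha hγ
    · exact DD_le ha hγ h (by linarith) (by linarith)

lemma integral_DD {a γ s : ℝ} (ha : 0 < a) (hγ : 0 < γ) (hs : 0 < s) :
    ∫ σ in (0:ℝ)..s, DD a γ σ = mm a γ s := by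
  have h := intervalIntegral.integral_eq_sub_of_hasDeriv_right_of_le hs.le
    ((mm_continuousOn ha hγ).mono (Icc_subset_Ici_self))
    (fun σ hσ => (mm_hasDerivAt_sigma hσ.1).hasDerivWithinAt)
    ((intervalIntegrable_iff_integrableOn_Icc_of_le hs.le).2 (DD_integrableOn ha hγ hs.le))
  rw [h, mm_zero, sub_zero]

lemma kk_hasDerivAt_gamma {a σ : ℝ} (hσ : 0 < σ) (γ' : ℝ) :
    HasDerivAt (fun g => kk a g σ) (DD a γ' σ) γ' := by
  obtain ⟨r, hr0, rfl⟩ : ∃ r : ℝ, 0 < r ∧ r ^ 2 = σ :=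
    ⟨Real.sqrt σ, Real.sqrt_pos.2 hσ, Real.sq_sqrt hσ.le⟩
  have hr2 : (0:ℝ) < r ^ 2 := by positivity
  have h32 : (0:ℝ) < (r^2) ^ ((3:ℝ)/2) := Real.rpow_pos_of_pos hr2 _
  have hf : HasDerivAt (fun g : ℝ => Real.sqrt a * g / (2 * Real.sqrt π * (r^2) ^ ((3:ℝ)/2)))
      (Real.sqrt a / (2 * Real.sqrt π * (r^2) ^ ((3:ℝ)/2))) γ' := by
    have := ((hasDerivAt_id γ').const_mul (Real.sqrt a)).div_const
      (2 * Real.sqrt π * (r^2) ^ ((3:ℝ)/2))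
    simpa using this
  have hginner : HasDerivAt (fun g : ℝ => -(a * g ^ 2 / (4 * r^2)))
      (-(a * (2 * γ') / (4 * r^2))) γ' := by
    have h1 := hasDerivAt_pow 2 γ'
    have h2 := ((h1.const_mul a).div_const (4 * r^2)).neg
    refine HasDerivAt.congr_deriv h2 ?_
    push_cast
    ring
  have hg := hginner.exp
  have key := hf.mul hg
  have hfun : (fun g => kk a g (r^2)) = fun g : ℝ =>
      Real.sqrt a * g / (2 * Real.sqrt π * (r^2) ^ ((3:ℝ)/2)) *
        Real.exp (-(a * g ^ 2 / (4 * r^2))) := rfl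
  rw [hfun]
  refine HasDerivAt.congr_deriv key ?_
  unfold DD
  rw [rpow_32_eq hr2, rpow_52_eq hr2, Real.sqrt_sq hr0.le]
  have hE := Real.exp_pos (-(a * γ' ^ 2 / (4 * r ^ 2)))
  field_simp
  ring

lemma phi_gamma_deriv {a γ s : ℝ} (ha : 0 < a) (hγ : 0 < γ) (hs : 0 < s) :
    HasDerivAt (fun γ' => Phi a γ' s) (mm a γ s) γ := by
  have hball : ∀ γ' ∈ Metric.ball γ (γ/2), γ/2 ≤ γ' ∧ γ' ≤ 3*γ/2 := by
    intro γ' hγ'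
    rw [Metric.mem_ball, Real.dist_eq, abs_lt] at hγ'
    constructor <;> linarith [hγ'.1, hγ'.2]
  have key := _root_.hasDerivAt_integral_of_dominated_loc_of_deriv_le
    (μ := volume.restrict (Ioc (0:ℝ) s)) (F := fun γ' σ => kk a γ' σ)
    (F' := fun γ' σ => DD a γ' σ) (x₀ := γ) (s := Metric.ball γ (γ/2)) (bound := fun _ => DDbound a γ)
    (Metric.ball_mem_nhds γ (by positivity))
    (Eventually.of_forall fun γ' => (kk_measurable a γ').aestronglyMeasurable)
    ((kk_integrableOn ha hγ hs.le).mono_set Ioc_subset_Icc_self)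
    ((DD_measurable a γ).aestronglyMeasurable)
    (by
      refine (ae_restrict_iff' measurableSet_Ioc).2 (Eventually.of_forall fun σ hσ => ?_)
      intro γ' hγ'
      rw [Real.norm_eq_abs]
      exact DD_le ha hγ hσ.1 (hball γ' hγ').1 (hball γ' hγ').2)
    (integrable_const _)
    (by
      refine (ae_restrict_iff' measurableSet_Ioc).2 (Eventually.of_forall fun σ hσ => ?_)
      intro γ' _
      exact kk_hasDerivAt_gamma hσ.1 γ')
  have hD := key.2
  have h1 : (fun γ' => ∫ σ in Ioc (0:ℝ) s, kk a γ' σ) = fun γ' => Phi a γ' s := by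
    funext γ'
    rw [Phi, intervalIntegral.integral_of_le hs.le]
  have h2 : (∫ σ in Ioc (0:ℝ) s, DD a γ σ) = mm a γ s := by
    rw [← integral_DD ha hγ hs, intervalIntegral.integral_of_le hs.le]
  rw [h1, h2] at hD
  exact hD

lemma mm_abs_le {a γ' s : ℝ} (ha : 0 < a) (hs : 0 < s) :
    |mm a γ' s| ≤ Real.sqrt a / Real.sqrt π / Real.sqrt s := by
  have hsq : (0:ℝ) < Real.sqrt s := Real.sqrt_pos.2 hs
  have hexp : Real.exp (-(a * γ' ^ 2 / (4 * s))) ≤ 1 := by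
    apply Real.exp_le_one_iff.2
    have : (0:ℝ) ≤ a * γ' ^ 2 / (4 * s) := by positivity
    linarith
  unfold mm
  rw [abs_mul, abs_neg, abs_of_nonneg (show (0:ℝ) ≤ Real.sqrt a / Real.sqrt π by positivity),
    abs_of_nonneg (show (0:ℝ) ≤ Real.exp (-(a * γ' ^ 2 / (4 * s))) / Real.sqrt s by positivity)]
  have h2 : Real.exp (-(a * γ' ^ 2 / (4 * s))) / Real.sqrt s ≤ 1 / Real.sqrt s := by gcongr
  calc Real.sqrt a / Real.sqrt π * (Real.exp (-(a * γ' ^ 2 / (4 * s))) / Real.sqrt s)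
      ≤ Real.sqrt a / Real.sqrt π * (1 / Real.sqrt s) := by gcongr
    _ = Real.sqrt a / Real.sqrt π / Real.sqrt s := by ring

lemma bound_integrableOn {M t : ℝ} (ha : 0 < (1:ℝ)) (ht : 0 < t) (a' : ℝ) :
    IntegrableOn (fun s : ℝ => M * (Real.sqrt a' / Real.sqrt π / Real.sqrt s))
      (Ioc 0 t) volume := by
  have base : IntervalIntegrable (fun x : ℝ => x ^ (-(1:ℝ)/2)) volume 0 t :=
    intervalIntegrable_rpow' (by norm_num)
  have base' : IntegrableOn (fun x : ℝ => x ^ (-(1:ℝ)/2)) (Ioc 0 t) volume := by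
    rw [intervalIntegrable_iff, uIoc_of_le ht.le] at base
    exact base
  have := (base'.const_mul (M * (Real.sqrt a' / Real.sqrt π)))
  refine this.congr ?_
  refine (ae_restrict_iff' measurableSet_Ioc).2 (Eventually.of_forall fun s hs => ?_)
  have hs0 : (0:ℝ) < s := hs.1
  show M * (Real.sqrt a' / Real.sqrt π) * s ^ (-(1:ℝ)/2)
      = M * (Real.sqrt a' / Real.sqrt π / Real.sqrt s)
  rw [show (-(1:ℝ)/2) = -((1:ℝ)/2) by norm_num, Real.rpow_neg hs0.le, ← Real.sqrt_eq_rpow]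
  field_simp

lemma ibp {a t γ : ℝ} {u : ℝ → ℝ} (ha : 0 < a) (ht : 0 < t)
    (hu : ContDiffOn ℝ 1 u (Set.Icc 0 t)) (hγ : 0 < γ) :
    ∫ s in (0:ℝ)..t, u (t - s) * kk a γ s
      = u 0 * Phi a γ t
        + ∫ s in (0:ℝ)..t, derivWithin u (Set.Icc 0 t) (t - s) * Phi a γ s := by
  set u' := derivWithin u (Set.Icc 0 t) with hu'def
  have humaps : ∀ s ∈ Icc (0:ℝ) t, t - s ∈ Icc (0:ℝ) t := fun s hs =>
    ⟨by linarith [hs.2], by linarith [hs.1]⟩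
  have hconts : Continuous (fun s : ℝ => t - s) := by continuity
  have hucont : ContinuousOn (fun s => u (t - s)) (Icc 0 t) :=
    hu.continuousOn.comp hconts.continuousOn humaps
  have hu'cont : ContinuousOn u' (Icc 0 t) :=
    hu.continuousOn_derivWithin (uniqueDiffOn_Icc ht) le_rfl
  have hu'contc : ContinuousOn (fun s => u' (t - s)) (Icc 0 t) :=
    hu'cont.comp hconts.continuousOn humaps
  have hWcont : ContinuousOn (fun s => u (t - s) * Phi a γ s) (Icc 0 t) :=
    hucont.mul (Phi_continuousOn ha hγ ht.le)
  have hWderiv : ∀ s ∈ Ioo (0:ℝ) t, HasDerivWithinAt (fun s => u (t - s) * Phi a γ s)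
      (u (t - s) * kk a γ s - u' (t - s) * Phi a γ s) (Ioi s) s := by
    intro s hs
    have hts : t - s ∈ Ioo (0:ℝ) t := ⟨by linarith [hs.2], by linarith [hs.1]⟩
    have hmem : Icc (0:ℝ) t ∈ 𝓝 (t - s) := Icc_mem_nhds hts.1 hts.2
    have hud : HasDerivAt u (u' (t - s)) (t - s) :=
      (((hu.differentiableOn one_ne_zero) (t - s) ⟨hts.1.le, hts.2.le⟩).hasDerivWithinAt).hasDerivAt hmem
    have hinner : HasDerivAt (fun s : ℝ => t - s) (-1) s := by
      simpa using (hasDerivAt_id s).const_sub t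
    have hcomp := HasDerivAt.comp s hud hinner
    have hPhi : HasDerivAt (Phi a γ) (kk a γ s) s := Phi_hasDerivAt ha hγ hs.1
    have hmul := hcomp.mul hPhi
    have heq : u' (t - s) * (-1) * Phi a γ s + (u ∘ fun s => t - s) s * kk a γ s
        = u (t - s) * kk a γ s - u' (t - s) * Phi a γ s := by
      simp only [Function.comp]
      ring
    rw [heq] at hmul
    exact hmul.hasDerivWithinAt
  have hi1 : IntervalIntegrable (fun s => u (t - s) * kk a γ s) volume 0 t := by
    apply ContinuousOn.intervalIntegrable
    rw [uIcc_of_le ht.le]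
    exact hucont.mul ((kk_continuousOn ha hγ).mono Icc_subset_Ici_self)
  have hi2 : IntervalIntegrable (fun s => u' (t - s) * Phi a γ s) volume 0 t := by
    apply ContinuousOn.intervalIntegrable
    rw [uIcc_of_le ht.le]
    exact hu'contc.mul (Phi_continuousOn ha hγ ht.le)
  have hFTC := intervalIntegral.integral_eq_sub_of_hasDeriv_right_of_le ht.le hWcont hWderiv
    (hi1.sub hi2)
  rw [intervalIntegral.integral_sub hi1 hi2] at hFTC
  simp only [sub_self, sub_zero] at hFTC
  rw [Phi_zero, mul_zero, sub_zero] at hFTC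
  linarith

lemma psi_deriv {a t γ M : ℝ} {u : ℝ → ℝ} (ha : 0 < a) (ht : 0 < t)
    (hu : ContDiffOn ℝ 1 u (Set.Icc 0 t)) (hγ : 0 < γ)
    (hM : ∀ x ∈ Icc (0:ℝ) t, ‖derivWithin u (Set.Icc 0 t) x‖ ≤ M) :
    HasDerivAt (fun γ' => u 0 * Phi a γ' t
        + ∫ s in Ioc (0:ℝ) t, derivWithin u (Set.Icc 0 t) (t - s) * Phi a γ' s)
      (u 0 * mm a γ t
        + ∫ s in Ioc (0:ℝ) t, derivWithin u (Set.Icc 0 t) (t - s) * mm a γ s) γ := by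
  set u' := derivWithin u (Set.Icc 0 t) with hu'def
  have hM0 : 0 ≤ M := le_trans (norm_nonneg _) (hM 0 ⟨le_rfl, ht.le⟩)
  have hconts : Continuous (fun s : ℝ => t - s) := by continuity
  have humaps : ∀ s ∈ Icc (0:ℝ) t, t - s ∈ Icc (0:ℝ) t := fun s hs =>
    ⟨by linarith [hs.2], by linarith [hs.1]⟩
  have hu'cont : ContinuousOn u' (Icc 0 t) :=
    hu.continuousOn_derivWithin (uniqueDiffOn_Icc ht) le_rfl
  have hu'contc : ContinuousOn (fun s => u' (t - s)) (Icc 0 t) :=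
    hu'cont.comp hconts.continuousOn humaps
  have hball : ∀ γ' ∈ Metric.ball γ (γ/2), 0 < γ' := by
    intro γ' hγ'
    rw [Metric.mem_ball, Real.dist_eq, abs_lt] at hγ'
    linarith [hγ'.1]
  have term1 : HasDerivAt (fun γ' => u 0 * Phi a γ' t) (u 0 * mm a γ t) γ :=
    (phi_gamma_deriv ha hγ ht).const_mul (u 0)
  have term2 : HasDerivAt
      (fun γ' => ∫ s in Ioc (0:ℝ) t, u' (t - s) * Phi a γ' s)
      (∫ s in Ioc (0:ℝ) t, u' (t - s) * mm a γ s) γ := by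
    have key := _root_.hasDerivAt_integral_of_dominated_loc_of_deriv_le
      (μ := volume.restrict (Ioc (0:ℝ) t))
      (F := fun γ' s => u' (t - s) * Phi a γ' s)
      (F' := fun γ' s => u' (t - s) * mm a γ' s) (x₀ := γ) (s := Metric.ball γ (γ/2))
      (bound := fun s => M * (Real.sqrt a / Real.sqrt π / Real.sqrt s))
      (Metric.ball_mem_nhds γ (by positivity))
      ?_ ?_ ?_ ?_ ?_ ?_
    · exact key.2
    · -- hF_meas
      filter_upwards [isOpen_Ioi.eventually_mem hγ] with γ' (hγ' : (0:ℝ) < γ')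
      exact ((hu'contc.mono Ioc_subset_Icc_self).mul
        ((Phi_continuousOn ha hγ' ht.le).mono Ioc_subset_Icc_self)).aestronglyMeasurable
        measurableSet_Ioc
    · -- hF_int
      exact (((hu'contc.mul (Phi_continuousOn ha hγ ht.le)).integrableOn_Icc)).mono_set
        Ioc_subset_Icc_self
    · -- hF'_meas
      exact ((hu'contc.mono Ioc_subset_Icc_self).mul
        (fun s hs => (mm_continuousAt hs.1).continuousWithinAt)).aestronglyMeasurable
        measurableSet_Ioc
    · -- h_bound
      refine (ae_restrict_iff' measurableSet_Ioc).2 (Eventually.of_forall fun s hs => ?_)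
      intro γ' _
      rw [Real.norm_eq_abs, abs_mul]
      have h1 : |u' (t - s)| ≤ M := by
        rw [← Real.norm_eq_abs]
        exact hM _ (humaps s ⟨hs.1.le, hs.2⟩)
      exact mul_le_mul h1 (mm_abs_le ha hs.1) (abs_nonneg _) hM0
    · -- bound_integrable
      exact bound_integrableOn one_pos ht a
    · -- h_diff
      refine (ae_restrict_iff' measurableSet_Ioc).2 (Eventually.of_forall fun s hs => ?_)
      intro γ' hγ'
      exact (phi_gamma_deriv ha (hball γ' hγ') hs.1).const_mul (u' (t - s))
  exact term1.add term2

/-- Proposition 3.5 of the paper, the bottom shear stress: the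
limit as γ → 0⁺ of the γ-derivative of the boundary-kernel convolution. -/
theorem bottom_shear_stress
    (a t : ℝ) (ha : 0 < a) (ht : 0 < t)
    (u : ℝ → ℝ)
    (hu : ContDiffOn ℝ 1 u (Set.Icc 0 t)) :
    Tendsto (fun γ : ℝ =>
        deriv (fun γ' => ∫ s in (0 : ℝ)..t,
          u (t - s) * (Real.sqrt a * γ' / (2 * Real.sqrt Real.pi * s ^ ((3 : ℝ) / 2)) *
            Real.exp (-(a * γ' ^ 2 / (4 * s))))) γ)
      (nhdsWithin 0 (Set.Ioi 0))
      (nhds (-(Real.sqrt a / Real.sqrt Real.pi) *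
        (u 0 / Real.sqrt t
          + ∫ s in (0 : ℝ)..t, derivWithin u (Set.Icc 0 t) (t - s) / Real.sqrt s))) := by
  set u' := derivWithin u (Set.Icc 0 t) with hu'def
  have hconts : Continuous (fun s : ℝ => t - s) := by continuity
  have humaps : ∀ s ∈ Icc (0:ℝ) t, t - s ∈ Icc (0:ℝ) t := fun s hs =>
    ⟨by linarith [hs.2], by linarith [hs.1]⟩
  have hu'cont : ContinuousOn u' (Icc 0 t) :=
    hu.continuousOn_derivWithin (uniqueDiffOn_Icc ht) le_rfl
  have hu'contc : ContinuousOn (fun s => u' (t - s)) (Icc 0 t) :=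
    hu'cont.comp hconts.continuousOn humaps
  obtain ⟨M, hM⟩ := isCompact_Icc.exists_bound_of_continuousOn hu'cont
  have hM0 : 0 ≤ M := le_trans (norm_nonneg _) (hM 0 ⟨le_rfl, ht.le⟩)
  have T1 : Tendsto (fun γ : ℝ => u 0 * mm a γ t) (𝓝[>] (0:ℝ)) (𝓝 (u 0 * mm a 0 t)) := by
    have hc : Continuous (fun γ : ℝ => mm a γ t) := by
      have hin : Continuous (fun γ : ℝ => -(a * γ ^ 2 / (4 * t))) := by
        apply Continuous.neg
        exact (continuous_const.mul (continuous_pow 2)).div_const _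
      exact continuous_const.mul ((Real.continuous_exp.comp hin).div_const _)
    exact (((hc.tendsto 0).const_mul (u 0)).mono_left nhdsWithin_le_nhds)
  have T2 : Tendsto (fun γ : ℝ => ∫ s in Ioc (0:ℝ) t, u' (t - s) * mm a γ s) (𝓝[>] (0:ℝ))
      (𝓝 (∫ s in Ioc (0:ℝ) t, u' (t - s) * mm a 0 s)) := by
    apply MeasureTheory.tendsto_integral_filter_of_dominated_convergence
      (bound := fun s => M * (Real.sqrt a / Real.sqrt π / Real.sqrt s))
    · refine Eventually.of_forall fun γ => ?_
      exact ((hu'contc.mono Ioc_subset_Icc_self).mul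
        (fun s hs => (mm_continuousAt hs.1).continuousWithinAt)).aestronglyMeasurable
        measurableSet_Ioc
    · refine Eventually.of_forall fun γ => ?_
      refine (ae_restrict_iff' measurableSet_Ioc).2 (Eventually.of_forall fun s hs => ?_)
      rw [Real.norm_eq_abs, abs_mul]
      have h1 : |u' (t - s)| ≤ M := by
        rw [← Real.norm_eq_abs]
        exact hM _ (humaps s ⟨hs.1.le, hs.2⟩)
      exact mul_le_mul h1 (mm_abs_le ha hs.1) (abs_nonneg _) hM0
    · exact bound_integrableOn one_pos ht a
    · refine (ae_restrict_iff' measurableSet_Ioc).2 (Eventually.of_forall fun s hs => ?_)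
      have hc : Continuous (fun γ : ℝ => u' (t - s) * mm a γ s) := by
        apply continuous_const.mul
        have hin : Continuous (fun γ : ℝ => -(a * γ ^ 2 / (4 * s))) := by
          apply Continuous.neg
          exact (continuous_const.mul (continuous_pow 2)).div_const _
        exact continuous_const.mul ((Real.continuous_exp.comp hin).div_const _)
      exact (hc.tendsto 0).mono_left nhdsWithin_le_nhds
  have TT := T1.add T2
  have hmm0 : ∀ s : ℝ, mm a 0 s = -(Real.sqrt a / Real.sqrt π) * (1 / Real.sqrt s) := by
    intro s
    unfold mm
    norm_num
  have hint0 : (∫ s in Ioc (0:ℝ) t, u' (t - s) * mm a 0 s)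
      = -(Real.sqrt a / Real.sqrt π) * ∫ s in (0:ℝ)..t, u' (t - s) / Real.sqrt s := by
    rw [intervalIntegral.integral_of_le ht.le, ← MeasureTheory.integral_const_mul]
    congr 1
    funext s
    rw [hmm0 s]
    ring
  have hL : u 0 * mm a 0 t + (∫ s in Ioc (0:ℝ) t, u' (t - s) * mm a 0 s)
      = -(Real.sqrt a / Real.sqrt π) *
        (u 0 / Real.sqrt t + ∫ s in (0:ℝ)..t, u' (t - s) / Real.sqrt s) := by
    rw [hmm0 t, hint0]
    ring
  rw [← hL]
  refine TT.congr' ?_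
  filter_upwards [self_mem_nhdsWithin] with γ (hγmem : γ ∈ Ioi (0:ℝ))
  have hγ0 : (0:ℝ) < γ := hγmem
  have hPsiD := psi_deriv ha ht hu hγ0 hM
  have heqF : (fun γ' => ∫ s in (0:ℝ)..t, u (t - s) * kk a γ' s)
      =ᶠ[𝓝 γ] (fun γ' => u 0 * Phi a γ' t
        + ∫ s in Ioc (0:ℝ) t, u' (t - s) * Phi a γ' s) := by
    filter_upwards [isOpen_Ioi.eventually_mem hγmem] with γ' (hγ' : (0:ℝ) < γ')
    rw [ibp ha ht hu hγ', intervalIntegral.integral_of_le ht.le]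
  have hderiv : deriv (fun γ' => ∫ s in (0:ℝ)..t, u (t - s) * kk a γ' s) γ
      = u 0 * mm a γ t + ∫ s in Ioc (0:ℝ) t, u' (t - s) * mm a γ s := by
    rw [heqF.deriv_eq, hPsiD.deriv]
  exact hderiv.symm
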